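/- In the first Weyl algebra R = A₁(k) = k⟨x,y : xy = yx + 1⟩ over a field k, the right ideal I := x²R + (1+xy)R satisfies: I + xR = R and x⁻¹I = xR; consequently R/I ≅ R/xR as right R-modules. -/

import Mathlib

/-- The defining relation of the first Weyl algebra `k⟨x,y⟩/(xy = yx + 1)`,
with `x = ι false` and `y = ι true` in the free algebra on two generators. -/
inductive WeylRel (k : Type*) [Field k] :
    FreeAlgebra k Bool → FreeAlgebra k Bool → Prop
  | rel : WeylRel k (FreeAlgebra.ι k false * FreeAlgebra.ι k true)
      (FreeAlgebra.ι k true * FreeAlgebra.ι k false + 1)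

/-- The first Weyl algebra `A₁(k) = k⟨x,y : xy = yx + 1⟩`. -/
noncomputable abbrev WeylAlgebra (k : Type*) [Field k] := RingQuot (WeylRel k)

namespace Weyl8
open Polynomial
variable (k : Type*) [Field k]

noncomputable def wx : WeylAlgebra k := RingQuot.mkRingHom (WeylRel k) (FreeAlgebra.ι k false)
noncomputable def wy : WeylAlgebra k := RingQuot.mkRingHom (WeylRel k) (FreeAlgebra.ι k true)

lemma comm : wx k * wy k = wy k * wx k + 1 := by
  have := RingQuot.mkRingHom_rel (WeylRel.rel (k := k))
  simp only [map_mul, map_add, map_one] at this; exact this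

lemma adjoin_top : Algebra.adjoin k ({wx k, wy k} : Set (WeylAlgebra k)) = ⊤ := by
  have hsurj := RingQuot.mkAlgHom_surjective k (WeylRel k)
  have htop : (RingQuot.mkAlgHom k (WeylRel k)).range = ⊤ :=
    (AlgHom.range_eq_top _).mpr hsurj
  rw [eq_top_iff, ← htop, ← Algebra.map_top, ← FreeAlgebra.adjoin_range_ι, AlgHom.map_adjoin]
  apply Algebra.adjoin_mono
  rintro _ ⟨_, ⟨b, rfl⟩, rfl⟩
  cases b
  · left
    rw [wx, ← RingQuot.mkAlgHom_coe k]; rfl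
  · right
    rw [wy, ← RingQuot.mkAlgHom_coe k]; rfl

lemma ybx (b : ℕ) : wy k ^ (b + 1) * wx k = wx k * wy k ^ (b + 1) - (b + 1) • wy k ^ b := by
  have h2 : wy k * wx k = wx k * wy k - 1 := by
    rw [eq_sub_iff_add_eq]; exact (comm k).symm
  induction b with
  | zero =>
    rw [pow_one, pow_zero, zero_add, one_smul, h2]
  | succ b ih =>
    have h1 : wy k ^ (b + 1 + 1) * wx k = wy k * (wy k ^ (b + 1) * wx k) := by
      rw [← mul_assoc, ← pow_succ']
    rw [h1, ih, mul_sub, ← mul_assoc, h2, sub_mul, one_mul, mul_smul_comm, ← pow_succ',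
      mul_assoc, ← pow_succ', sub_sub, succ_nsmul (wy k ^ (b + 1)) (b + 1)]
    abel

noncomputable def M : Submodule k (WeylAlgebra k) :=
  (Submodule.span (WeylAlgebra k)ᵐᵒᵖ ({wx k} : Set (WeylAlgebra k))).restrictScalars k ⊔
    Submodule.span k (Set.range fun b : ℕ => wy k ^ b)

lemma one_mem_M : (1 : WeylAlgebra k) ∈ M k :=
  Submodule.mem_sup_right (Submodule.subset_span ⟨0, pow_zero _⟩)

lemma x_mem_xR : wx k ∈ (Submodule.span (WeylAlgebra k)ᵐᵒᵖ ({wx k} : Set (WeylAlgebra k))) :=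
  Submodule.subset_span rfl

lemma mem_spanY_mul_x (w : WeylAlgebra k)
    (hw : w ∈ Submodule.span k (Set.range fun b : ℕ => wy k ^ b)) : w * wx k ∈ M k := by
  induction hw using Submodule.span_induction with
  | mem z hz =>
    obtain ⟨b, rfl⟩ := hz
    show wy k ^ b * wx k ∈ M k
    cases b with
    | zero =>
      rw [pow_zero, one_mul]
      exact Submodule.mem_sup_left (x_mem_xR k)
    | succ b =>
      rw [ybx k b, sub_eq_add_neg]
      apply Submodule.add_mem
      · exact Submodule.mem_sup_left
          (Submodule.smul_mem _ (MulOpposite.op (wy k ^ (b + 1))) (x_mem_xR k))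
      · refine Submodule.neg_mem _ (Submodule.mem_sup_right (nsmul_mem ?_ (b + 1)))
        exact Submodule.subset_span ⟨b, rfl⟩
  | zero => simp [Submodule.zero_mem (M k)]
  | add z₁ z₂ _ _ h1 h2 =>
    rw [add_mul]; exact Submodule.add_mem _ h1 h2
  | smul c z _ h =>
    rw [smul_mul_assoc]; exact Submodule.smul_mem _ c h

lemma mem_spanY_mul_y (w : WeylAlgebra k)
    (hw : w ∈ Submodule.span k (Set.range fun b : ℕ => wy k ^ b)) : w * wy k ∈ M k := by
  induction hw using Submodule.span_induction with
  | mem z hz =>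
    obtain ⟨b, rfl⟩ := hz
    show wy k ^ b * wy k ∈ M k
    rw [← pow_succ]
    exact Submodule.mem_sup_right (Submodule.subset_span ⟨b + 1, rfl⟩)
  | zero => simp [Submodule.zero_mem (M k)]
  | add z₁ z₂ _ _ h1 h2 =>
    rw [add_mul]; exact Submodule.add_mem _ h1 h2
  | smul c z _ h =>
    rw [smul_mul_assoc]; exact Submodule.smul_mem _ c h

lemma M_mul_x (m : WeylAlgebra k) (hm : m ∈ M k) : m * wx k ∈ M k := by
  obtain ⟨v, hv, w, hw, rfl⟩ := Submodule.mem_sup.mp hm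
  rw [add_mul]
  apply Submodule.add_mem
  · exact Submodule.mem_sup_left (Submodule.smul_mem _ (MulOpposite.op (wx k)) hv)
  · exact mem_spanY_mul_x k w hw

lemma M_mul_y (m : WeylAlgebra k) (hm : m ∈ M k) : m * wy k ∈ M k := by
  obtain ⟨v, hv, w, hw, rfl⟩ := Submodule.mem_sup.mp hm
  rw [add_mul]
  apply Submodule.add_mem
  · exact Submodule.mem_sup_left (Submodule.smul_mem _ (MulOpposite.op (wy k)) hv)
  · exact mem_spanY_mul_y k w hw

lemma M_top (u : WeylAlgebra k) : u ∈ M k := by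
  have key : ∀ r : WeylAlgebra k, ∀ m ∈ M k, m * r ∈ M k := by
    intro r
    have hr : r ∈ Algebra.adjoin k ({wx k, wy k} : Set (WeylAlgebra k)) := by
      rw [adjoin_top k]; trivial
    induction hr using Algebra.adjoin_induction with
    | mem z hz =>
      rcases hz with h | h
      · subst h; exact M_mul_x k
      · rw [Set.mem_singleton_iff] at h; subst h; exact M_mul_y k
    | algebraMap c =>
      intro m hm
      rw [Algebra.algebraMap_eq_smul_one, mul_smul_comm, mul_one]
      exact Submodule.smul_mem _ c hm
    | add z₁ z₂ _ _ h1 h2 =>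
      intro m hm
      rw [mul_add]
      exact Submodule.add_mem _ (h1 m hm) (h2 m hm)
    | mul z₁ z₂ _ _ h1 h2 =>
      intro m hm
      rw [← mul_assoc]
      exact h2 _ (h1 m hm)
  simpa using key u 1 (one_mem_M k)

/-! ### The polynomial representation -/

noncomputable def D : Polynomial (Polynomial k) →ₗ[k] Polynomial (Polynomial k) where
  toFun f := ⟨AddMonoidAlgebra.ofCoeff (f.toFinsupp.coeff.mapRange (⇑derivative) (map_zero _))⟩
  map_add' f g := by
    apply Polynomial.ext; intro n
    show derivative ((f + g).coeff n) = _
    rw [Polynomial.coeff_add, Polynomial.coeff_add, map_add]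
    rfl
  map_smul' c f := by
    apply Polynomial.ext; intro n
    show derivative ((c • f).coeff n) = _
    rw [Polynomial.coeff_smul, RingHom.id_apply, Polynomial.coeff_smul, derivative_smul]
    rfl

lemma coeff_D (f : Polynomial (Polynomial k)) (n : ℕ) :
    (D k f).coeff n = derivative (f.coeff n) := rfl

lemma D_C_mul (a : Polynomial k) (f : Polynomial (Polynomial k)) :
    D k (Polynomial.C a * f) = Polynomial.C (derivative a) * f + Polynomial.C a * D k f := by
  apply Polynomial.ext; intro n
  rw [coeff_D, Polynomial.coeff_add, Polynomial.coeff_C_mul, Polynomial.coeff_C_mul,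
    Polynomial.coeff_C_mul, coeff_D, derivative_mul]

noncomputable def mx : Module.End k (Polynomial (Polynomial k)) :=
  LinearMap.mulLeft k (Polynomial.X : Polynomial (Polynomial k)) + D k

noncomputable def my : Module.End k (Polynomial (Polynomial k)) :=
  LinearMap.mulLeft k (Polynomial.C (Polynomial.X : Polynomial k))

lemma weyl_rel_end : mx k * my k = my k * mx k + 1 := by
  apply LinearMap.ext; intro f
  simp only [mx, my, Module.End.mul_apply, LinearMap.add_apply, LinearMap.mulLeft_apply,
    Module.End.one_apply, D_C_mul, Polynomial.derivative_X, map_one, one_mul]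
  ring

noncomputable def gen : Bool → Module.End k (Polynomial (Polynomial k))
  | false => mx k
  | true => my k

noncomputable def rho : WeylAlgebra k →ₐ[k] Module.End k (Polynomial (Polynomial k)) :=
  RingQuot.liftAlgHom k ⟨FreeAlgebra.lift k (gen k), by
    intro a b h
    cases h
    simp only [map_mul, map_add, map_one, FreeAlgebra.lift_ι_apply, gen]
    exact weyl_rel_end k⟩

lemma rho_x : rho k (wx k) = mx k := by
  rw [wx, ← RingQuot.mkAlgHom_coe k, RingHom.coe_coe, rho, RingQuot.liftAlgHom_mkAlgHom_apply,
    FreeAlgebra.lift_ι_apply]; rfl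

lemma rho_y : rho k (wy k) = my k := by
  rw [wy, ← RingQuot.mkAlgHom_coe k, RingHom.coe_coe, rho, RingQuot.liftAlgHom_mkAlgHom_apply,
    FreeAlgebra.lift_ι_apply]; rfl

noncomputable def eps : WeylAlgebra k →ₗ[k] Polynomial (Polynomial k) where
  toFun r := rho k r 1
  map_add' a b := by simp [map_add]
  map_smul' c a := by simp [map_smul]

lemma eps_mul_x (r : WeylAlgebra k) : eps k (wx k * r) = mx k (eps k r) := by
  show rho k (wx k * r) 1 = _
  rw [map_mul, rho_x]
  rfl

lemma eps_pow (b : ℕ) : eps k (wy k ^ b) = Polynomial.C (Polynomial.X ^ b) := by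
  induction b with
  | zero =>
    show rho k (wy k ^ 0) 1 = _
    rw [pow_zero, map_one (rho k), pow_zero, map_one (Polynomial.C (R := Polynomial k))]
    exact Module.End.one_apply 1
  | succ b ih =>
    show rho k (wy k ^ (b + 1)) 1 = _
    rw [pow_succ']
    rw [map_mul, rho_y]
    show my k (rho k (wy k ^ b) 1) = _
    show my k (eps k (wy k ^ b)) = _
    rw [ih, my, LinearMap.mulLeft_apply, ← map_mul, ← pow_succ']

/-- The core degree argument. -/
lemma mx_eq_C (f : Polynomial (Polynomial k)) (q : Polynomial k)
    (h : mx k f = Polynomial.C q) : f = 0 := by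
  by_contra hf
  have hcoeff := congrArg (fun p => Polynomial.coeff p (f.natDegree + 1)) h
  simp only [mx, LinearMap.add_apply, LinearMap.mulLeft_apply, Polynomial.coeff_add,
    Polynomial.coeff_X_mul, coeff_D, Polynomial.coeff_C] at hcoeff
  rw [Polynomial.coeff_eq_zero_of_natDegree_lt (lt_add_one _)] at hcoeff
  simp only [map_zero, add_zero, Nat.add_one_ne_zero, if_false] at hcoeff
  exact hf (Polynomial.leadingCoeff_eq_zero.mp hcoeff)

lemma indep : LinearIndependent k (fun b : ℕ => eps k (wy k ^ b)) := by
  have h1 : (fun b : ℕ => eps k (wy k ^ b)) =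
      (LinearMap.restrictScalars k (Algebra.linearMap (Polynomial k) (Polynomial (Polynomial k)))) ∘
        (fun b : ℕ => (Polynomial.X : Polynomial k) ^ b) := by
    funext b
    simp only [eps_pow, Function.comp_apply, LinearMap.coe_restrictScalars,
      Algebra.linearMap_apply, Polynomial.algebraMap_eq]
  rw [h1]
  have h2 : LinearIndependent k (fun b : ℕ => (Polynomial.X : Polynomial k) ^ b) := by
    have := (Polynomial.basisMonomials k).linearIndependent
    have heq : (fun b : ℕ => (Polynomial.X : Polynomial k) ^ b) =
        fun n => (Polynomial.basisMonomials k) n := by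
      funext n
      rw [Polynomial.X_pow_eq_monomial, Polynomial.coe_basisMonomials]
    rw [heq]; exact this
  apply h2.map' _ (LinearMap.ker_eq_bot.mpr ?_)
  intro a b hab
  exact Polynomial.C_injective (by simpa using hab)

lemma span_eps_zero (w : WeylAlgebra k)
    (hw : w ∈ Submodule.span k (Set.range fun b : ℕ => wy k ^ b))
    (h0 : eps k w = 0) : w = 0 := by
  rw [Finsupp.mem_span_range_iff_exists_finsupp] at hw
  obtain ⟨l, rfl⟩ := hw
  have h1 : (Finsupp.linearCombination k fun b : ℕ => eps k (wy k ^ b)) l = 0 := by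
    rw [Finsupp.linearCombination_apply]
    rw [map_finsuppSum] at h0
    simpa only [map_smul] using h0
  have h2 := linearIndependent_iff.mp (indep k) l h1
  simp [h2]

lemma exists_C (w : WeylAlgebra k)
    (hw : w ∈ Submodule.span k (Set.range fun b : ℕ => wy k ^ b)) :
    ∃ q : Polynomial k, eps k w = Polynomial.C q := by
  induction hw using Submodule.span_induction with
  | mem z hz =>
    obtain ⟨b, rfl⟩ := hz
    exact ⟨Polynomial.X ^ b, eps_pow k b⟩
  | zero => exact ⟨0, by simp⟩
  | add z₁ z₂ _ _ h1 h2 =>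
    obtain ⟨q1, hq1⟩ := h1; obtain ⟨q2, hq2⟩ := h2
    exact ⟨q1 + q2, by rw [map_add, hq1, hq2, map_add]⟩
  | smul c z _ h =>
    obtain ⟨q, hq⟩ := h
    exact ⟨c • q, by rw [map_smul, hq, Polynomial.smul_C]⟩

lemma eps_ker (u : WeylAlgebra k) (hu : eps k u = 0) :
    u ∈ Submodule.span (WeylAlgebra k)ᵐᵒᵖ ({wx k} : Set (WeylAlgebra k)) := by
  obtain ⟨v, hv, w, hw, rfl⟩ := Submodule.mem_sup.mp (M_top k (u := u))
  rw [Submodule.restrictScalars_mem] at hv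
  obtain ⟨a, rfl⟩ := Submodule.mem_span_singleton.mp hv
  obtain ⟨q, hq⟩ := exists_C k w hw
  rw [map_add, MulOpposite.smul_eq_mul_unop, eps_mul_x, hq] at hu
  have hs : eps k a.unop = 0 := by
    apply mx_eq_C k _ (-q)
    rw [map_neg]
    exact eq_neg_of_add_eq_zero_left hu
  have hw0 : w = 0 := by
    apply span_eps_zero k w hw
    rw [hq, ← hu, hs, map_zero, zero_add]
  rw [hw0, add_zero]
  exact Submodule.smul_mem _ a (x_mem_xR k)

lemma weyl_cancel (u : WeylAlgebra k) (h : wx k * u = 0) :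
    u ∈ Submodule.span (WeylAlgebra k)ᵐᵒᵖ ({wx k} : Set (WeylAlgebra k)) := by
  apply eps_ker
  apply mx_eq_C k _ 0
  rw [map_zero, ← eps_mul_x, h, map_zero]

end Weyl8

theorem stmt8 (k : Type*) [Field k] :
    ∀ (x y : WeylAlgebra k),
      x = RingQuot.mkRingHom (WeylRel k) (FreeAlgebra.ι k false) →
      y = RingQuot.mkRingHom (WeylRel k) (FreeAlgebra.ι k true) →
      ∀ I : Submodule (WeylAlgebra k)ᵐᵒᵖ (WeylAlgebra k),
        I = Submodule.span (WeylAlgebra k)ᵐᵒᵖ ({x ^ 2} : Set (WeylAlgebra k)) ⊔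
            Submodule.span (WeylAlgebra k)ᵐᵒᵖ ({1 + x * y} : Set (WeylAlgebra k)) →
        (I ⊔ Submodule.span (WeylAlgebra k)ᵐᵒᵖ ({x} : Set (WeylAlgebra k)) = ⊤) ∧
        (∀ r : WeylAlgebra k, x * r ∈ I ↔
          r ∈ Submodule.span (WeylAlgebra k)ᵐᵒᵖ ({x} : Set (WeylAlgebra k))) ∧
        Nonempty ((WeylAlgebra k ⧸ I) ≃ₗ[(WeylAlgebra k)ᵐᵒᵖ]
          (WeylAlgebra k ⧸
            Submodule.span (WeylAlgebra k)ᵐᵒᵖ ({x} : Set (WeylAlgebra k)))) := by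
  intro x y hx hy I hI
  have hx' : x = Weyl8.wx k := hx
  have hy' : y = Weyl8.wy k := hy
  subst hx' hy' hI
  set R := WeylAlgebra k
  set xR : Submodule Rᵐᵒᵖ R := Submodule.span Rᵐᵒᵖ ({Weyl8.wx k} : Set R) with hxR
  set I : Submodule Rᵐᵒᵖ R := Submodule.span Rᵐᵒᵖ ({Weyl8.wx k ^ 2} : Set R) ⊔
      Submodule.span Rᵐᵒᵖ ({1 + Weyl8.wx k * Weyl8.wy k} : Set R) with hI
  have hcomm := Weyl8.comm k
  -- Part A
  have partA : I ⊔ xR = ⊤ := by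
    rw [eq_top_iff]
    intro t _
    have h1 : (1 : R) ∈ I ⊔ xR := by
      have e : (1 : R) = MulOpposite.op (1 : R) • (1 + Weyl8.wx k * Weyl8.wy k) +
          -(MulOpposite.op (Weyl8.wy k) • Weyl8.wx k) := by
        have h' : MulOpposite.op (Weyl8.wy k) • Weyl8.wx k = Weyl8.wx k * Weyl8.wy k := rfl
        rw [h', op_smul_eq_mul, mul_one]
        abel
      rw [e]
      apply Submodule.add_mem
      · exact Submodule.mem_sup_left (Submodule.mem_sup_right
          (Submodule.smul_mem _ _ (Submodule.subset_span rfl)))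
      · exact Submodule.neg_mem _ (Submodule.mem_sup_right
          (Submodule.smul_mem _ _ (Submodule.subset_span rfl)))
    have e2 : t = MulOpposite.op t • (1 : R) := by
      rw [op_smul_eq_mul, one_mul]
    rw [e2]
    exact Submodule.smul_mem _ _ h1
  -- Part B
  have partB : ∀ r : R, Weyl8.wx k * r ∈ I ↔ r ∈ xR := by
    intro r
    constructor
    · intro hr
      rw [hI] at hr
      obtain ⟨i1, hi1, i2, hi2, hsum⟩ := Submodule.mem_sup.mp hr
      obtain ⟨a', rfl⟩ := Submodule.mem_span_singleton.mp hi1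
      obtain ⟨b', rfl⟩ := Submodule.mem_span_singleton.mp hi2
      rw [MulOpposite.smul_eq_mul_unop, MulOpposite.smul_eq_mul_unop] at hsum
      set a := a'.unop with ha
      set b := b'.unop with hb
      -- hsum : wx^2 * a + (1 + wx*wy) * b = wx * r
      set c := r - Weyl8.wx k * a - Weyl8.wy k * b with hc
      have hbc : b = Weyl8.wx k * c := by
        rw [hc]
        have : Weyl8.wx k * (r - Weyl8.wx k * a - Weyl8.wy k * b) =
            Weyl8.wx k * r - Weyl8.wx k ^ 2 * a - Weyl8.wx k * (Weyl8.wy k * b) := by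
          simp only [mul_sub, mul_add, ← sub_sub, pow_two, mul_assoc]
        rw [this, ← hsum]
        noncomm_ring
      set u := r - (Weyl8.wx k * a + Weyl8.wx k * Weyl8.wy k * c) with hu
      have hxu : Weyl8.wx k * u = 0 := by
        rw [hu]
        have expand : Weyl8.wx k * (r - (Weyl8.wx k * a + Weyl8.wx k * Weyl8.wy k * c)) =
            Weyl8.wx k * r - Weyl8.wx k ^ 2 * a -
              Weyl8.wx k * (Weyl8.wx k * Weyl8.wy k) * c := by
          simp only [mul_sub, mul_add, ← sub_sub, pow_two, mul_assoc]
        rw [expand, ← hsum, hbc]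
        have : (1 + Weyl8.wx k * Weyl8.wy k) * (Weyl8.wx k * c) =
            Weyl8.wx k * (Weyl8.wy k * Weyl8.wx k + 1) * c := by
          noncomm_ring
        rw [this, ← hcomm]
        noncomm_ring
      have humem : u ∈ xR := Weyl8.weyl_cancel k u hxu
      have hreq : r = Weyl8.wx k * a + Weyl8.wx k * Weyl8.wy k * c + u := by
        rw [hu]; abel
      rw [hreq]
      apply Submodule.add_mem _ _ humem
      apply Submodule.add_mem
      · have : Weyl8.wx k * a = MulOpposite.op a • Weyl8.wx k := rfl
        rw [this]
        exact Submodule.smul_mem _ _ (Submodule.subset_span rfl)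
      · have : Weyl8.wx k * Weyl8.wy k * c =
            MulOpposite.op (Weyl8.wy k * c) • Weyl8.wx k := by
          rw [op_smul_eq_mul]
          noncomm_ring
        rw [this]
        exact Submodule.smul_mem _ _ (Submodule.subset_span rfl)
    · intro hr
      obtain ⟨a, rfl⟩ := Submodule.mem_span_singleton.mp hr
      have : Weyl8.wx k * (a • Weyl8.wx k) = a • (Weyl8.wx k ^ 2) := by
        rw [MulOpposite.smul_eq_mul_unop, MulOpposite.smul_eq_mul_unop]
        noncomm_ring
      rw [this, hI]
      exact Submodule.mem_sup_left (Submodule.smul_mem _ _ (Submodule.subset_span rfl))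
  refine ⟨partA, partB, ?_⟩
  -- Part C
  let lmulx : R →ₗ[Rᵐᵒᵖ] R :=
    { toFun := fun r => Weyl8.wx k * r
      map_add' := mul_add _
      map_smul' := fun c r => by
        simp only [MulOpposite.smul_eq_mul_unop, RingHom.id_apply, mul_assoc] }
  let g : R →ₗ[Rᵐᵒᵖ] R ⧸ I := I.mkQ.comp lmulx
  have hker : LinearMap.ker g = xR := by
    ext r
    rw [LinearMap.mem_ker]
    show I.mkQ (Weyl8.wx k * r) = 0 ↔ _
    rw [Submodule.mkQ_apply, Submodule.Quotient.mk_eq_zero]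
    exact partB r
  have hsurj : Function.Surjective g := by
    intro t
    obtain ⟨t', rfl⟩ := I.mkQ_surjective t
    have ht' : t' ∈ I ⊔ xR := by rw [partA]; trivial
    obtain ⟨i, hi, v, hv, hsum⟩ := Submodule.mem_sup.mp ht'
    obtain ⟨c, rfl⟩ := Submodule.mem_span_singleton.mp hv
    refine ⟨c.unop, ?_⟩
    show I.mkQ (Weyl8.wx k * c.unop) = I.mkQ t'
    rw [Submodule.mkQ_apply, Submodule.mkQ_apply, Submodule.Quotient.eq]
    have : Weyl8.wx k * c.unop - t' = -i := by
      rw [← hsum, MulOpposite.smul_eq_mul_unop]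
      abel
    rw [this]
    exact Submodule.neg_mem _ hi
  exact ⟨((LinearMap.quotKerEquivOfSurjective g hsurj).symm.trans
    (Submodule.quotEquivOfEq _ _ hker))⟩
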